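/- Let n ≥ 3 and Γ = {x ∈ ℝ^{n+1} : x_1 > 0 and x_{n+1} = x_1 x_2 + x_1 Σ_{j=3}^n x_j²}. For q > 0, t ∈ ℝ, s = (s_3,…,s_n) ∈ ℝ^{n−2}, define the affine map H_{q,t,s}(x) = (q x_1, x_2 − 2Σ_{j=3}^n s_j x_j + t, x_3 + s_3, …, x_n + s_n, q(x_{n+1} + x_1 Σ_{j=3}^n s_j² + t x_1)). Then (i) each H_{q,t,s} maps Γ bijectively onto Γ, and (ii) for every x ∈ Γ there exist unique q > 0, t ∈ ℝ, s ∈ ℝ^{n−2} such that H_{q,t,s}(1,0,…,0) = x. In particular this group of affine maps acts simply transitively on Γ. -/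

import Mathlib

def gammaSurf (n : ℕ) (hn : 3 ≤ n) : Set (Fin (n + 1) → ℝ) :=
  {x | 0 < x 0 ∧ x (Fin.last n) = x 0 * x ⟨1, by omega⟩ +
    x 0 * ∑ j : Fin (n + 1), (if 2 ≤ (j : ℕ) ∧ (j : ℕ) < n then x j ^ 2 else 0)}

def Hmap (n : ℕ) (q t : ℝ) (s : Fin (n - 2) → ℝ) (x : Fin (n + 1) → ℝ) :
    Fin (n + 1) → ℝ := fun i =>
  if h0 : (i : ℕ) = 0 then q * x i
  else if h1 : (i : ℕ) = 1 then
    x i - 2 * (∑ j : Fin (n - 2), s j * x ⟨(j : ℕ) + 2, by have := j.isLt; omega⟩) + t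
  else if h2 : (i : ℕ) = n then
    q * (x i + x 0 * (∑ j : Fin (n - 2), s j ^ 2) + t * x 0)
  else x i + s ⟨(i : ℕ) - 2, by have := i.isLt; omega⟩

lemma sum_shift {n : ℕ} (hn : 3 ≤ n) (h : Fin (n+1) → ℝ) :
    (∑ j : Fin (n+1), if 2 ≤ (j:ℕ) ∧ (j:ℕ) < n then h j else 0)
      = ∑ j : Fin (n-2), h ⟨(j:ℕ)+2, by have := j.isLt; omega⟩ := by
  set F : ℕ → ℝ := fun k => if hk : k < n+1 then h ⟨k, hk⟩ else 0 with hF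
  have h1 : (∑ j : Fin (n+1), if 2 ≤ (j:ℕ) ∧ (j:ℕ) < n then h j else 0)
      = ∑ k ∈ Finset.range (n+1), if 2 ≤ k ∧ k < n then F k else 0 := by
    rw [← Fin.sum_univ_eq_sum_range (fun k => if 2 ≤ k ∧ k < n then F k else 0)]
    refine Finset.sum_congr rfl fun j _ => ?_
    by_cases hj : 2 ≤ (j:ℕ) ∧ (j:ℕ) < n
    · simp only [hj, if_true, hF, dif_pos j.isLt, Fin.eta]
    · simp [hj]
  have h2 : (∑ j : Fin (n-2), h ⟨(j:ℕ)+2, by have := j.isLt; omega⟩)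
      = ∑ k ∈ Finset.range (n-2), F (k+2) := by
    rw [← Fin.sum_univ_eq_sum_range (fun k => F (k+2))]
    refine Finset.sum_congr rfl fun j _ => ?_
    have hj : (j:ℕ)+2 < n+1 := by have := j.isLt; omega
    simp only [hF, dif_pos hj]
  rw [h1, h2]
  have h3 : (Finset.range (n+1)).filter (fun k => 2 ≤ k ∧ k < n) = Finset.Ico 2 n := by
    ext k; simp [Finset.mem_Ico]; omega
  rw [← Finset.sum_filter, h3, Finset.sum_Ico_eq_sum_range]
  refine Finset.sum_congr (by congr 1) fun k _ => by rw [Nat.add_comm]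

lemma mem_gamma_iff {n : ℕ} (hn : 3 ≤ n) (x : Fin (n+1) → ℝ) :
    x ∈ gammaSurf n hn ↔ 0 < x 0 ∧
      x (Fin.last n) = x 0 * x ⟨1, by omega⟩ +
        x 0 * ∑ j : Fin (n-2), x ⟨(j:ℕ)+2, by have := j.isLt; omega⟩ ^ 2 := by
  unfold gammaSurf
  rw [Set.mem_setOf_eq, sum_shift hn (fun j => x j ^ 2)]

variable {n : ℕ}

lemma Hmap_zero (q t : ℝ) (s : Fin (n-2) → ℝ) (x : Fin (n+1) → ℝ) (i : Fin (n+1))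
    (hi : (i:ℕ) = 0) : Hmap n q t s x i = q * x i := by
  unfold Hmap; rw [dif_pos hi]

lemma Hmap_one (hn : 3 ≤ n) (q t : ℝ) (s : Fin (n-2) → ℝ) (x : Fin (n+1) → ℝ) (i : Fin (n+1))
    (hi : (i:ℕ) = 1) :
    Hmap n q t s x i =
      x i - 2 * (∑ j : Fin (n-2), s j * x ⟨(j:ℕ)+2, by have := j.isLt; omega⟩) + t := by
  unfold Hmap; rw [dif_neg (by omega), dif_pos hi]

lemma Hmap_last (hn : 3 ≤ n) (q t : ℝ) (s : Fin (n-2) → ℝ) (x : Fin (n+1) → ℝ) (i : Fin (n+1))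
    (hi : (i:ℕ) = n) :
    Hmap n q t s x i = q * (x i + x 0 * (∑ j : Fin (n-2), s j ^ 2) + t * x 0) := by
  unfold Hmap; rw [dif_neg (by omega), dif_neg (by omega), dif_pos hi]

lemma Hmap_mid (hn : 3 ≤ n) (q t : ℝ) (s : Fin (n-2) → ℝ) (x : Fin (n+1) → ℝ) (i : Fin (n+1))
    (hi : 2 ≤ (i:ℕ)) (hi' : (i:ℕ) < n) :
    Hmap n q t s x i = x i + s ⟨(i:ℕ) - 2, by have := i.isLt; omega⟩ := by
  unfold Hmap; rw [dif_neg (by omega), dif_neg (by omega), dif_neg (by omega)]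

lemma maps_to (hn : 3 ≤ n) {q : ℝ} (hq : 0 < q) (t : ℝ) (s : Fin (n-2) → ℝ) :
    Set.MapsTo (Hmap n q t s) (gammaSurf n hn) (gammaSurf n hn) := by
  intro x hx
  rw [mem_gamma_iff hn] at hx ⊢
  obtain ⟨hx0, hxe⟩ := hx
  have e0 : Hmap n q t s x 0 = q * x 0 := Hmap_zero q t s x 0 (by simp)
  have e1 : Hmap n q t s x ⟨1, by omega⟩ = x ⟨1, by omega⟩ -
      2*(∑ j : Fin (n-2), s j * x ⟨(j:ℕ)+2, by have := j.isLt; omega⟩) + t :=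
    Hmap_one hn q t s x _ rfl
  have eL : Hmap n q t s x (Fin.last n) =
      q * (x (Fin.last n) + x 0 * (∑ j : Fin (n-2), s j ^2) + t * x 0) :=
    Hmap_last hn q t s x _ (Fin.val_last n)
  have em : ∀ j : Fin (n-2), Hmap n q t s x ⟨(j:ℕ)+2, by have := j.isLt; omega⟩
      = x ⟨(j:ℕ)+2, by have := j.isLt; omega⟩ + s j := by
    intro j
    rw [Hmap_mid hn q t s x _ (by simp) (by show (j:ℕ)+2 < n; have := j.isLt; omega)]
    congr 1
  refine ⟨by rw [e0]; exact mul_pos hq hx0, ?_⟩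
  rw [eL, e0, e1]
  simp_rw [em]
  have expand : ∑ j : Fin (n-2), (x ⟨(j:ℕ)+2, by have := j.isLt; omega⟩ + s j)^2
      = (∑ j : Fin (n-2), x ⟨(j:ℕ)+2, by have := j.isLt; omega⟩^2)
        + 2*(∑ j : Fin (n-2), s j * x ⟨(j:ℕ)+2, by have := j.isLt; omega⟩)
        + ∑ j : Fin (n-2), s j^2 := by
    rw [Finset.mul_sum, ← Finset.sum_add_distrib, ← Finset.sum_add_distrib]
    exact Finset.sum_congr rfl fun j _ => by ring
  rw [expand, hxe]
  ring

lemma left_inv (hn : 3 ≤ n) {q : ℝ} (hq : q ≠ 0) (t : ℝ) (s : Fin (n-2) → ℝ)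
    (x : Fin (n+1) → ℝ) :
    Hmap n q⁻¹ (-(t + 2 * ∑ j : Fin (n-2), s j ^ 2)) (-s) (Hmap n q t s x) = x := by
  have em : ∀ j : Fin (n-2), Hmap n q t s x ⟨(j:ℕ)+2, by have := j.isLt; omega⟩
      = x ⟨(j:ℕ)+2, by have := j.isLt; omega⟩ + s j := fun j => by
    rw [Hmap_mid hn q t s x _ (by simp) (by show (j:ℕ)+2 < n; have := j.isLt; omega)]
    congr 1
  funext i
  by_cases h0 : (i:ℕ) = 0
  · rw [Hmap_zero _ _ _ _ _ h0, Hmap_zero _ _ _ _ _ h0]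
    field_simp
  by_cases h1 : (i:ℕ) = 1
  · rw [Hmap_one hn _ _ _ _ _ h1, Hmap_one hn _ _ _ _ _ h1]
    simp_rw [em]
    have hsum : ∑ j : Fin (n-2), (-s) j * (x ⟨(j:ℕ)+2, by have := j.isLt; omega⟩ + s j)
        = -((∑ j : Fin (n-2), s j * x ⟨(j:ℕ)+2, by have := j.isLt; omega⟩)
            + ∑ j : Fin (n-2), s j ^ 2) := by
      rw [← Finset.sum_add_distrib, ← Finset.sum_neg_distrib]
      exact Finset.sum_congr rfl fun j _ => by simp [Pi.neg_apply]; ring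
    rw [hsum]
    ring
  by_cases h2 : (i:ℕ) = n
  · rw [Hmap_last hn _ _ _ _ _ h2, Hmap_last hn _ _ _ _ _ h2,
      Hmap_zero q t s x 0 (by simp)]
    have hs2 : ∑ j : Fin (n-2), (-s) j ^ 2 = ∑ j : Fin (n-2), s j ^ 2 := by
      exact Finset.sum_congr rfl fun j _ => by simp
    rw [hs2]
    field_simp
    ring
  · rw [Hmap_mid hn _ _ _ _ _ (by omega) (by have := i.isLt; omega),
      Hmap_mid hn _ _ _ _ _ (by omega) (by have := i.isLt; omega)]
    simp

lemma right_inv (hn : 3 ≤ n) {q : ℝ} (hq : q ≠ 0) (t : ℝ) (s : Fin (n-2) → ℝ)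
    (x : Fin (n+1) → ℝ) :
    Hmap n q t s (Hmap n q⁻¹ (-(t + 2 * ∑ j : Fin (n-2), s j ^ 2)) (-s) x) = x := by
  have h := left_inv hn (inv_ne_zero hq) (-(t + 2 * ∑ j : Fin (n-2), s j ^ 2)) (-s) x
  have hs2 : ∑ j : Fin (n-2), (-s) j ^ 2 = ∑ j : Fin (n-2), s j ^ 2 :=
    Finset.sum_congr rfl fun j _ => by simp
  rw [inv_inv, neg_neg, hs2] at h
  have ht : -(-(t + 2 * ∑ j : Fin (n-2), s j ^ 2) + 2 * ∑ j : Fin (n-2), s j ^ 2) = t := by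
    ring
  rwa [ht] at h

lemma bijOn (hn : 3 ≤ n) {q : ℝ} (hq : 0 < q) (t : ℝ) (s : Fin (n-2) → ℝ) :
    Set.BijOn (Hmap n q t s) (gammaSurf n hn) (gammaSurf n hn) := by
  refine ⟨maps_to hn hq t s, ?_, ?_⟩
  · intro a _ b _ hab
    have h := congrArg (Hmap n q⁻¹ (-(t + 2 * ∑ j : Fin (n-2), s j ^ 2)) (-s)) hab
    rwa [left_inv hn hq.ne' t s a, left_inv hn hq.ne' t s b] at h
  · intro y hy
    exact ⟨Hmap n q⁻¹ (-(t + 2 * ∑ j : Fin (n-2), s j ^ 2)) (-s) y,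
      maps_to hn (inv_pos.mpr hq) _ _ hy, right_inv hn hq.ne' t s y⟩

theorem Hmap_bijOn_and_simply_transitive (n : ℕ) (hn : 3 ≤ n) :
    (∀ (q t : ℝ) (s : Fin (n - 2) → ℝ), 0 < q →
      Set.BijOn (Hmap n q t s) (gammaSurf n hn) (gammaSurf n hn)) ∧
    (∀ x ∈ gammaSurf n hn, ∃! p : ℝ × ℝ × (Fin (n - 2) → ℝ),
      0 < p.1 ∧ Hmap n p.1 p.2.1 p.2.2 (fun i => if (i : ℕ) = 0 then 1 else 0) = x) := by
  refine ⟨fun q t s hq => bijOn hn hq t s, fun x hx => ?_⟩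
  rw [mem_gamma_iff hn] at hx
  obtain ⟨hx0, hxe⟩ := hx
  set e : Fin (n+1) → ℝ := fun i => if (i : ℕ) = 0 then 1 else 0 with he
  refine ⟨⟨x 0, x ⟨1, by omega⟩, fun j => x ⟨(j:ℕ)+2, by have := j.isLt; omega⟩⟩,
    ⟨hx0, ?_⟩, ?_⟩
  · funext i
    by_cases h0 : (i:ℕ) = 0
    · have hi : i = 0 := Fin.ext (by simpa using h0)
      subst hi
      rw [Hmap_zero _ _ _ _ _ (by simp)]
      simp [he]
    by_cases h1 : (i:ℕ) = 1
    · have hi : i = ⟨1, by omega⟩ := Fin.ext h1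
      rw [hi]
      rw [Hmap_one hn _ _ _ _ _ rfl]
      simp [he]
    by_cases h2 : (i:ℕ) = n
    · have hi : i = Fin.last n := Fin.ext (by simpa using h2)
      rw [hi]
      rw [Hmap_last hn _ _ _ _ _ (Fin.val_last n)]
      have hen : e (Fin.last n) = 0 := by simp [he, Fin.val_last]; omega
      have he0 : e 0 = 1 := by simp [he]
      rw [hen, he0, hxe]
      ring
    · rw [Hmap_mid hn _ _ _ _ _ (by omega) (by have := i.isLt; omega)]
      have hei : e i = 0 := by simp only [he]; exact if_neg h0
      rw [hei]
      have : x ⟨((i:ℕ) - 2) + 2, by have := i.isLt; omega⟩ = x i := by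
        congr 1
        exact Fin.ext (by simp; omega)
      simpa using this
  · rintro ⟨q, t, s⟩ ⟨hq, hH⟩
    have hq0 : q = x 0 := by
      have h := congrFun hH 0
      rw [Hmap_zero _ _ _ _ _ (by simp)] at h
      simpa [he] using h
    have ht : t = x ⟨1, by omega⟩ := by
      have h := congrFun hH ⟨1, by omega⟩
      rw [Hmap_one hn _ _ _ _ _ rfl] at h
      simpa [he] using h
    have hs : ∀ j : Fin (n-2), s j = x ⟨(j:ℕ)+2, by have := j.isLt; omega⟩ := by
      intro j
      have h := congrFun hH ⟨(j:ℕ)+2, by have := j.isLt; omega⟩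
      rw [Hmap_mid hn _ _ _ _ _ (by simp) (by show (j:ℕ)+2 < n; have := j.isLt; omega)] at h
      simpa [he] using h
    simp only [Prod.mk.injEq]
    exact ⟨hq0, ht, funext hs⟩
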